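/- A structure M for (Σ, Φ) is standard (interprets each inductive predicate as the least fixpoint of the operator for Φ) if and only if for every inductive predicate P and terms t⃗ and assignment ρ: M ⊨_ρ P(t⃗) holds exactly when M ⊨_ρ P^{(k)}(t⃗) holds for some k ∈ ℕ. -/

import Mathlib

/-! ### First-order logic with inductively defined predicates (FOL_ID) -/

/-- A first-order signature with ordinary and inductive predicate symbols. -/
structure Signature : Type 1 where
  Func : Type
  arF : Func → ℕ
  Pred : Type
  arP : Pred → ℕ
  IndPred : Type
  arI : IndPred → ℕ

/-- Terms over a signature. -/
inductive Tm (S : Signature) : Type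
  | var : ℕ → Tm S
  | func (f : S.Func) : (Fin (S.arF f) → Tm S) → Tm S

/-- Formulas of FOL_ID. -/
inductive Fm (S : Signature) : Type
  | fals : Fm S
  | eq : Tm S → Tm S → Fm S
  | pred (Q : S.Pred) : (Fin (S.arP Q) → Tm S) → Fm S
  | ind (P : S.IndPred) : (Fin (S.arI P) → Tm S) → Fm S
  | not : Fm S → Fm S
  | and : Fm S → Fm S → Fm S
  | or : Fm S → Fm S → Fm S
  | imp : Fm S → Fm S → Fm S
  | all : ℕ → Fm S → Fm S
  | ex : ℕ → Fm S → Fm S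

/-- A first-order structure for a signature. -/
structure Struc (S : Signature) : Type 1 where
  U : Type
  interpF (f : S.Func) : (Fin (S.arF f) → U) → U
  interpP (Q : S.Pred) : Set (Fin (S.arP Q) → U)
  interpI : Set ((P : S.IndPred) × (Fin (S.arI P) → U))

/-- Evaluation of terms. -/
def Tm.eval {S : Signature} (M : Struc S) (ρ : ℕ → M.U) : Tm S → M.U
  | .var n => ρ n
  | .func f ts => M.interpF f (fun i => (ts i).eval M ρ)

/-- Update of a variable assignment. -/
def update {α : Type} (ρ : ℕ → α) (n : ℕ) (a : α) : ℕ → α :=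
  fun m => if m = n then a else ρ m

/-- Tarskian satisfaction. -/
def Sat {S : Signature} (M : Struc S) (ρ : ℕ → M.U) : Fm S → Prop
  | .fals => False
  | .eq t u => t.eval M ρ = u.eval M ρ
  | .pred Q ts => (fun i => (ts i).eval M ρ) ∈ M.interpP Q
  | .ind P ts => ⟨P, fun i => (ts i).eval M ρ⟩ ∈ M.interpI
  | .not A => ¬ Sat M ρ A
  | .and A B => Sat M ρ A ∧ Sat M ρ B
  | .or A B => Sat M ρ A ∨ Sat M ρ B
  | .imp A B => Sat M ρ A → Sat M ρ B
  | .all n A => ∀ a : M.U, Sat M (update ρ n a) A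
  | .ex n A => ∃ a : M.U, Sat M (update ρ n a) A

/-- Free variables of a term. -/
def Tm.fv {S : Signature} : Tm S → Finset ℕ
  | .var n => {n}
  | .func _ ts => Finset.univ.biUnion (fun i => (ts i).fv)

/-- Free variables of a formula. -/
def Fm.fv {S : Signature} : Fm S → Finset ℕ
  | .fals => ∅
  | .eq t u => t.fv ∪ u.fv
  | .pred _ ts => Finset.univ.biUnion (fun i => (ts i).fv)
  | .ind _ ts => Finset.univ.biUnion (fun i => (ts i).fv)
  | .not A => A.fv
  | .and A B => A.fv ∪ B.fv
  | .or A B => A.fv ∪ B.fv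
  | .imp A B => A.fv ∪ B.fv
  | .all n A => A.fv.erase n
  | .ex n A => A.fv.erase n

/-- Simultaneous substitution on terms. -/
def Tm.subst {S : Signature} (σ : ℕ → Tm S) : Tm S → Tm S
  | .var n => σ n
  | .func f ts => .func f (fun i => (ts i).subst σ)

/-- Substitution of a (closed) term for a variable in a formula. -/
def Fm.substC {S : Signature} (x : ℕ) (t : Tm S) : Fm S → Fm S
  | .fals => .fals
  | .eq a b => .eq (a.subst (fun n => if n = x then t else .var n))
      (b.subst (fun n => if n = x then t else .var n))
  | .pred Q ts => .pred Q (fun i => (ts i).subst (fun n => if n = x then t else .var n))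
  | .ind P ts => .ind P (fun i => (ts i).subst (fun n => if n = x then t else .var n))
  | .not A => .not (A.substC x t)
  | .and A B => .and (A.substC x t) (B.substC x t)
  | .or A B => .or (A.substC x t) (B.substC x t)
  | .imp A B => .imp (A.substC x t) (B.substC x t)
  | .all n A => if n = x then .all n A else .all n (A.substC x t)
  | .ex n A => if n = x then .ex n A else .ex n (A.substC x t)

/-- A production rule for inductive predicates. -/
structure ProdRule (S : Signature) : Type where
  concl : S.IndPred
  conclArgs : Fin (S.arI concl) → Tm S
  ordPrems : List ((Q : S.Pred) × (Fin (S.arP Q) → Tm S))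
  indPrems : List ((P : S.IndPred) × (Fin (S.arI P) → Tm S))

/-- The monotone operator determined by a set of production rules over a structure. -/
def step {S : Signature} (M : Struc S) (Φ : List (ProdRule S))
    (X : Set ((P : S.IndPred) × (Fin (S.arI P) → M.U))) :
    Set ((P : S.IndPred) × (Fin (S.arI P) → M.U)) :=
  { v | ∃ r ∈ Φ, ∃ ρ : ℕ → M.U,
      (∀ q ∈ r.ordPrems, (fun i => (q.2 i).eval M ρ) ∈ M.interpP q.1) ∧
      (∀ p ∈ r.indPrems, ⟨p.1, fun i => (p.2 i).eval M ρ⟩ ∈ X) ∧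
      v = ⟨r.concl, fun i => (r.conclArgs i).eval M ρ⟩ }

theorem step_mono {S : Signature} (M : Struc S) (Φ : List (ProdRule S)) :
    Monotone (step M Φ) := by
  rintro X Y h v ⟨r, hr, ρ, hq, hp, hv⟩
  exact ⟨r, hr, ρ, hq, fun p hp' => h (hp p hp'), hv⟩

/-- The operator for the production rules, as an order homomorphism. -/
def stepHom {S : Signature} (M : Struc S) (Φ : List (ProdRule S)) :
    Set ((P : S.IndPred) × (Fin (S.arI P) → M.U)) →o
      Set ((P : S.IndPred) × (Fin (S.arI P) → M.U)) :=
  ⟨step M Φ, step_mono M Φ⟩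

/-- A structure is a standard model for `(S, Φ)` if it interprets the inductive
predicates by the least fixpoint of the operator for `Φ`. -/
def Standard {S : Signature} (M : Struc S) (Φ : List (ProdRule S)) : Prop :=
  M.interpI = OrderHom.lfp (stepHom M Φ)

/-- The variables occurring in a production rule. -/
def ProdRule.vars {S : Signature} (r : ProdRule S) : Finset ℕ :=
  (Finset.univ.biUnion fun i => (r.conclArgs i).fv) ∪
    (r.ordPrems.foldr (fun q s => s ∪ Finset.univ.biUnion fun i => (q.2 i).fv) ∅) ∪
    (r.indPrems.foldr (fun p s => s ∪ Finset.univ.biUnion fun i => (p.2 i).fv) ∅)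

def bigAnd {S : Signature} : List (Fm S) → Fm S
  | [] => .not .fals
  | A :: l => .and A (bigAnd l)

def bigOr {S : Signature} : List (Fm S) → Fm S
  | [] => .fals
  | A :: l => .or A (bigOr l)

def exList {S : Signature} : List ℕ → Fm S → Fm S
  | [], A => A
  | n :: l, A => .ex n (exList l A)

/-- The `k`-fold syntactic unfolding `P^{(k)}(t⃗)` of an inductive predicate:
`P^{(0)}(t⃗) ≡ ⊥` and `P^{(k+1)}(t⃗)` is the disjunction, over production rules with
conclusion `P t⃗₀`, of `∃y⃗ (t⃗ = t⃗₀ ∧ ⋀ Q_l u⃗_l ∧ ⋀ P_{j_p}^{(k)}(t⃗_p))`, with the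
rule variables `y⃗` renamed to be fresh for `t⃗`. -/
def unfold {S : Signature} [DecidableEq S.IndPred] (Φ : List (ProdRule S)) :
    ℕ → (P : S.IndPred) → (Fin (S.arI P) → Tm S) → Fm S
  | 0, _, _ => .fals
  | (k+1), P, ts =>
    bigOr (Φ.map fun r =>
      if h : r.concl = P then
        let N : ℕ := ((Finset.univ.biUnion fun i => (ts i).fv).sup id) + 1
        let σ : ℕ → Tm S := fun n => .var (n + N)
        exList ((r.vars.sort (· ≤ ·)).map (· + N))
          (.and (bigAnd ((List.finRange (S.arI P)).map fun i =>
              .eq (ts i) (((h ▸ r.conclArgs) i).subst σ)))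
            (.and (bigAnd (r.ordPrems.map fun q => .pred q.1 fun i => (q.2 i).subst σ))
              (bigAnd (r.indPrems.map fun p => unfold Φ k p.1 fun i => (p.2 i).subst σ))))
      else .fals)

/-! ### Auxiliary lemmas -/

theorem Tm.eval_subst {S : Signature} (M : Struc S) (ρ : ℕ → M.U) (σ : ℕ → Tm S) :
    ∀ t : Tm S, (t.subst σ).eval M ρ = t.eval M (fun n => (σ n).eval M ρ)
  | .var n => rfl
  | .func f ts => by
    simp only [Tm.subst, Tm.eval]
    congr 1
    funext i
    exact Tm.eval_subst M ρ σ (ts i)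

theorem Tm.eval_congr {S : Signature} (M : Struc S) {ρ ρ' : ℕ → M.U} :
    ∀ t : Tm S, (∀ n ∈ t.fv, ρ n = ρ' n) → t.eval M ρ = t.eval M ρ'
  | .var n, h => h n (by simp [Tm.fv])
  | .func f ts, h => by
    simp only [Tm.eval]
    congr 1
    funext i
    exact Tm.eval_congr M (ts i) fun n hn =>
      h n (by simp only [Tm.fv, Finset.mem_biUnion]; exact ⟨i, Finset.mem_univ i, hn⟩)

theorem sat_bigOr {S : Signature} (M : Struc S) (ρ : ℕ → M.U) :
    ∀ l : List (Fm S), Sat M ρ (bigOr l) ↔ ∃ A ∈ l, Sat M ρ A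
  | [] => by simp [bigOr, Sat]
  | A :: l => by
    simp only [bigOr, Sat, sat_bigOr M ρ l, List.mem_cons]
    constructor
    · rintro (h | ⟨B, hB, h⟩)
      · exact ⟨A, Or.inl rfl, h⟩
      · exact ⟨B, Or.inr hB, h⟩
    · rintro ⟨B, (rfl | hB), h⟩
      · exact Or.inl h
      · exact Or.inr ⟨B, hB, h⟩

theorem sat_bigAnd {S : Signature} (M : Struc S) (ρ : ℕ → M.U) :
    ∀ l : List (Fm S), Sat M ρ (bigAnd l) ↔ ∀ A ∈ l, Sat M ρ A
  | [] => by simp [bigAnd, Sat]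
  | A :: l => by
    simp only [bigAnd, Sat, sat_bigAnd M ρ l, List.mem_cons]
    constructor
    · rintro ⟨h1, h2⟩ B (rfl | hB)
      · exact h1
      · exact h2 B hB
    · intro h
      exact ⟨h A (Or.inl rfl), fun B hB => h B (Or.inr hB)⟩

theorem sat_exList {S : Signature} (M : Struc S) (A : Fm S) :
    ∀ (l : List ℕ) (ρ : ℕ → M.U),
      Sat M ρ (exList l A) ↔ ∃ ρ' : ℕ → M.U, (∀ n, n ∉ l → ρ' n = ρ n) ∧ Sat M ρ' A
  | [], ρ => by
    show Sat M ρ A ↔ _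
    constructor
    · intro h
      exact ⟨ρ, fun _ _ => rfl, h⟩
    · rintro ⟨ρ', h1, h2⟩
      have : ρ' = ρ := funext fun n => h1 n List.not_mem_nil
      rwa [this] at h2
  | n :: l, ρ => by
    show (∃ a, Sat M (update ρ n a) (exList l A)) ↔ _
    constructor
    · rintro ⟨a, h⟩
      obtain ⟨ρ', h1, h2⟩ := (sat_exList M A l (update ρ n a)).mp h
      refine ⟨ρ', fun m hm => ?_, h2⟩
      have hmn : m ≠ n := fun h => hm (by simp [h])
      rw [h1 m (fun h => hm (List.mem_cons_of_mem n h))]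
      simp only [update]
      rw [if_neg hmn]
    · rintro ⟨ρ', h1, h2⟩
      refine ⟨ρ' n, (sat_exList M A l (update ρ n (ρ' n))).mpr ⟨ρ', fun m hm => ?_, h2⟩⟩
      simp only [update]
      by_cases hmn : m = n
      · subst hmn; simp
      · rw [if_neg hmn]
        exact h1 m (by simp [hmn, hm])

theorem subset_foldr {α : Type} (g : α → Finset ℕ) :
    ∀ (l : List α) (q : α), q ∈ l → g q ⊆ l.foldr (fun q s => s ∪ g q) ∅
  | a :: l, q, hq => by
    simp only [List.foldr_cons]
    rcases List.mem_cons.mp hq with rfl | hq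
    · exact Finset.subset_union_right
    · exact (subset_foldr g l q hq).trans Finset.subset_union_left

theorem fv_concl_subset {S : Signature} (r : ProdRule S) (i : Fin (S.arI r.concl)) :
    (r.conclArgs i).fv ⊆ r.vars :=
  fun n hn => by
    simp only [ProdRule.vars, Finset.mem_union]
    exact Or.inl (Or.inl (Finset.mem_biUnion.mpr ⟨i, Finset.mem_univ i, hn⟩))

theorem fv_ord_subset {S : Signature} (r : ProdRule S)
    {q : (Q : S.Pred) × (Fin (S.arP Q) → Tm S)} (hq : q ∈ r.ordPrems) (i : Fin (S.arP q.1)) :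
    (q.2 i).fv ⊆ r.vars := by
  intro n hn
  have h1 : n ∈ Finset.univ.biUnion fun j => (q.2 j).fv :=
    Finset.mem_biUnion.mpr ⟨i, Finset.mem_univ i, hn⟩
  have h2 := subset_foldr (fun q => Finset.univ.biUnion fun i => (q.2 i).fv)
      r.ordPrems q hq h1
  unfold ProdRule.vars
  rw [Finset.mem_union, Finset.mem_union]
  exact Or.inl (Or.inr h2)

theorem fv_ind_subset {S : Signature} (r : ProdRule S)
    {p : (P : S.IndPred) × (Fin (S.arI P) → Tm S)} (hp : p ∈ r.indPrems) (i : Fin (S.arI p.1)) :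
    (p.2 i).fv ⊆ r.vars := by
  intro n hn
  have h1 : n ∈ Finset.univ.biUnion fun j => (p.2 j).fv :=
    Finset.mem_biUnion.mpr ⟨i, Finset.mem_univ i, hn⟩
  have h2 := subset_foldr (fun p => Finset.univ.biUnion fun i => (p.2 i).fv)
      r.indPrems p hp h1
  unfold ProdRule.vars
  rw [Finset.mem_union]
  exact Or.inr h2

/-- The main semantic lemma: satisfaction of the `k`-fold unfolding corresponds to
membership in the `k`-th iterate of the step operator applied to `∅`. -/
theorem unfold_sat {S : Signature} [DecidableEq S.IndPred] (Φ : List (ProdRule S))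
    (M : Struc S) :
    ∀ (k : ℕ) (P : S.IndPred) (ts : Fin (S.arI P) → Tm S) (ρ : ℕ → M.U),
      Sat M ρ (unfold Φ k P ts) ↔
        (⟨P, fun i => (ts i).eval M ρ⟩ : (P : S.IndPred) × (Fin (S.arI P) → M.U)) ∈
          (step M Φ)^[k] ∅ := by
  intro k
  induction k with
  | zero => intro P ts ρ; simp [unfold, Sat]
  | succ k IH =>
    intro P ts ρ
    rw [Function.iterate_succ_apply']
    set X := (step M Φ)^[k] (∅ : Set ((P : S.IndPred) × (Fin (S.arI P) → M.U))) with hX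
    show Sat M ρ (bigOr _) ↔ _
    rw [sat_bigOr]
    constructor
    · rintro ⟨A, hA, hSat⟩
      rw [List.mem_map] at hA
      obtain ⟨r, hr, rfl⟩ := hA
      by_cases h : r.concl = P
      · subst h
        rw [dif_pos rfl] at hSat
        set N : ℕ := ((Finset.univ.biUnion fun i => (ts i).fv).sup id) + 1 with hN
        set σ : ℕ → Tm S := fun n => Tm.var (n + N) with hσ
        set L : List ℕ := (r.vars.sort (· ≤ ·)).map (· + N) with hL
        rw [sat_exList] at hSat
        obtain ⟨ρ', hρ', hbody⟩ := hSat
        obtain ⟨heqs, hords, hinds⟩ :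
            Sat M ρ' (bigAnd _) ∧ Sat M ρ' (bigAnd _) ∧ Sat M ρ' (bigAnd _) := hbody
        rw [sat_bigAnd] at heqs hords hinds
        have hts : ∀ i, (ts i).eval M ρ = (ts i).eval M ρ' := by
          intro i
          refine Tm.eval_congr M (ts i) fun n hn => ?_
          refine (hρ' n ?_).symm
          intro hmem
          obtain ⟨m, _, rfl⟩ := List.mem_map.mp hmem
          have : m + N ≤ (Finset.univ.biUnion fun i => (ts i).fv).sup id :=
            Finset.le_sup (f := id) (Finset.mem_biUnion.mpr ⟨i, Finset.mem_univ i, hn⟩)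
          omega
        refine ⟨r, hr, fun n => ρ' (n + N), ?_, ?_, ?_⟩
        · intro q hq
          have hsat : (fun i => Tm.eval M ρ' ((q.2 i).subst σ)) ∈ M.interpP q.1 :=
            hords _ (List.mem_map.mpr ⟨q, hq, rfl⟩)
          have he : (fun i => Tm.eval M (fun n => ρ' (n + N)) (q.2 i)) =
              fun i => Tm.eval M ρ' ((q.2 i).subst σ) :=
            funext fun i => (Tm.eval_subst M ρ' σ (q.2 i)).symm
          rw [he]
          exact hsat
        · intro p hp
          have hsat := hinds _ (List.mem_map.mpr ⟨p, hp, rfl⟩)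
          rw [IH] at hsat
          have he : (fun i => Tm.eval M (fun n => ρ' (n + N)) (p.2 i)) =
              fun i => Tm.eval M ρ' ((p.2 i).subst σ) :=
            funext fun i => (Tm.eval_subst M ρ' σ (p.2 i)).symm
          show (⟨p.1, fun i => Tm.eval M (fun n => ρ' (n + N)) (p.2 i)⟩ :
            (P : S.IndPred) × (Fin (S.arI P) → M.U)) ∈ X
          rw [he]
          exact hsat
        · have hfun : (fun i => (ts i).eval M ρ) =
              fun i => Tm.eval M (fun n => ρ' (n + N)) (r.conclArgs i) := by
            funext i
            have h2 : (ts i).eval M ρ' = ((r.conclArgs i).subst σ).eval M ρ' :=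
              heqs _ (List.mem_map.mpr ⟨i, List.mem_finRange i, rfl⟩)
            exact (hts i).trans (h2.trans (Tm.eval_subst M ρ' σ (r.conclArgs i)))
          exact congrArg (Sigma.mk r.concl) hfun
      · rw [dif_neg h] at hSat
        exact absurd hSat (by simp [Sat])
    · rintro ⟨r, hr, ρ₀, hords, hinds, hv⟩
      have hconcl : P = r.concl := congrArg Sigma.fst hv
      subst hconcl
      have hargs : (fun i => (ts i).eval M ρ) = fun i => (r.conclArgs i).eval M ρ₀ :=
        eq_of_heq (Sigma.mk.inj_iff.mp hv).2
      refine ⟨_, List.mem_map.mpr ⟨r, hr, rfl⟩, ?_⟩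
      rw [dif_pos rfl]
      set N : ℕ := ((Finset.univ.biUnion fun i => (ts i).fv).sup id) + 1 with hN
      set σ : ℕ → Tm S := fun n => Tm.var (n + N) with hσ
      set L : List ℕ := (r.vars.sort (· ≤ ·)).map (· + N) with hL
      rw [sat_exList]
      refine ⟨fun m => if m ∈ L then ρ₀ (m - N) else ρ m, fun n hn => if_neg hn, ?_⟩
      set ρ' : ℕ → M.U := fun m => if m ∈ L then ρ₀ (m - N) else ρ m with hρ'
      have key : ∀ u : Tm S, u.fv ⊆ r.vars → (u.subst σ).eval M ρ' = u.eval M ρ₀ := by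
        intro u hu
        rw [Tm.eval_subst]
        refine Tm.eval_congr M u fun n hn => ?_
        show ρ' (n + N) = ρ₀ n
        have hmem : n + N ∈ L := List.mem_map.mpr
          ⟨n, (Finset.mem_sort (· ≤ ·)).mpr (hu hn), rfl⟩
        simp only [hρ', if_pos hmem, Nat.add_sub_cancel]
      have hts : ∀ i, (ts i).eval M ρ' = (ts i).eval M ρ := by
        intro i
        refine Tm.eval_congr M (ts i) fun n hn => ?_
        show ρ' n = ρ n
        refine if_neg fun hmem => ?_
        obtain ⟨m, _, rfl⟩ := List.mem_map.mp hmem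
        have : m + N ≤ (Finset.univ.biUnion fun i => (ts i).fv).sup id :=
          Finset.le_sup (f := id) (Finset.mem_biUnion.mpr ⟨i, Finset.mem_univ i, hn⟩)
        omega
      refine ⟨?_, ?_, ?_⟩
      · rw [sat_bigAnd]
        rintro A hA
        obtain ⟨i, _, rfl⟩ := List.mem_map.mp hA
        show (ts i).eval M ρ' = _
        rw [hts i, key _ (fv_concl_subset r i), congrFun hargs i]
      · rw [sat_bigAnd]
        rintro A hA
        obtain ⟨q, hq, rfl⟩ := List.mem_map.mp hA
        show (fun i => ((q.2 i).subst σ).eval M ρ') ∈ M.interpP q.1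
        have : (fun i => ((q.2 i).subst σ).eval M ρ') = fun i => (q.2 i).eval M ρ₀ :=
          funext fun i => key _ (fv_ord_subset r hq i)
        rw [this]
        exact hords q hq
      · rw [sat_bigAnd]
        rintro A hA
        obtain ⟨p, hp, rfl⟩ := List.mem_map.mp hA
        rw [IH]
        have : (fun i => ((p.2 i).subst σ).eval M ρ') = fun i => (p.2 i).eval M ρ₀ :=
          funext fun i => key _ (fv_ind_subset r hp i)
        rw [show (⟨p.1, fun i => ((p.2 i).subst σ).eval M ρ'⟩ :
            (P : S.IndPred) × (Fin (S.arI P) → M.U)) = ⟨p.1, fun i => (p.2 i).eval M ρ₀⟩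
          from by rw [this]]
        exact hinds p hp

theorem iterate_le_succ {S : Signature} (M : Struc S) (Φ : List (ProdRule S)) :
    ∀ k : ℕ, (step M Φ)^[k] ∅ ⊆ (step M Φ)^[k + 1] ∅
  | 0 => Set.empty_subset _
  | k + 1 => by
    rw [Function.iterate_succ_apply', Function.iterate_succ_apply']
    exact step_mono M Φ (iterate_le_succ M Φ k)

theorem iterate_mono {S : Signature} (M : Struc S) (Φ : List (ProdRule S))
    {k k' : ℕ} (h : k ≤ k') : (step M Φ)^[k] ∅ ⊆ (step M Φ)^[k'] ∅ := by
  induction h with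
  | refl => exact subset_rfl
  | step _ ih => exact ih.trans (iterate_le_succ M Φ _)

theorem exists_bound {α : Type} {C : α → ℕ → Prop}
    (mono : ∀ a k k', k ≤ k' → C a k → C a k') :
    ∀ l : List α, (∀ a ∈ l, ∃ k, C a k) → ∃ K, ∀ a ∈ l, C a K
  | [], _ => ⟨0, by simp⟩
  | a :: l, h => by
    obtain ⟨k, hk⟩ := h a List.mem_cons_self
    obtain ⟨K, hK⟩ := exists_bound mono l fun b hb => h b (List.mem_cons_of_mem a hb)
    refine ⟨max k K, fun b hb => ?_⟩
    rcases List.mem_cons.mp hb with rfl | hb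
    · exact mono b k _ (le_max_left k K) hk
    · exact mono b K _ (le_max_right k K) (hK b hb)

/-- ω-continuity: the least fixpoint is the union of the finite iterates. -/
theorem lfp_eq_iUnion {S : Signature} (M : Struc S) (Φ : List (ProdRule S)) :
    OrderHom.lfp (stepHom M Φ) = ⋃ k : ℕ, (step M Φ)^[k] ∅ := by
  apply le_antisymm
  · apply OrderHom.lfp_le
    rintro v ⟨r, hr, ρ, hq, hp, hv⟩
    have hp' : ∀ p ∈ r.indPrems, ∃ k,
        (⟨p.1, fun i => (p.2 i).eval M ρ⟩ : (P : S.IndPred) × (Fin (S.arI P) → M.U)) ∈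
          (step M Φ)^[k] ∅ := by
      intro p hpmem
      exact Set.mem_iUnion.mp (hp p hpmem)
    obtain ⟨K, hK⟩ := exists_bound
      (C := fun (p : (P : S.IndPred) × (Fin (S.arI P) → Tm S)) k =>
        (⟨p.1, fun i => (p.2 i).eval M ρ⟩ : (P : S.IndPred) × (Fin (S.arI P) → M.U)) ∈
          (step M Φ)^[k] ∅)
      (fun a k k' hkk' h => iterate_mono M Φ hkk' h) r.indPrems hp'
    refine Set.mem_iUnion.mpr ⟨K + 1, ?_⟩
    rw [Function.iterate_succ_apply']
    exact ⟨r, hr, ρ, hq, hK, hv⟩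
  · refine Set.iUnion_subset fun k => ?_
    induction k with
    | zero => exact Set.empty_subset _
    | succ k ih =>
      rw [Function.iterate_succ_apply']
      calc step M Φ ((step M Φ)^[k] ∅) ⊆ step M Φ (OrderHom.lfp (stepHom M Φ)) :=
            step_mono M Φ ih
        _ = OrderHom.lfp (stepHom M Φ) := OrderHom.map_lfp (stepHom M Φ)

/-- a structure `M` is standard (interprets the inductive predicates by
the least fixpoint of the operator for `Φ`) iff for every inductive predicate `P`,
terms `t⃗` and assignment `ρ`, `M ⊨_ρ P(t⃗)` holds exactly when `M ⊨_ρ P^{(k)}(t⃗)`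
holds for some `k ∈ ℕ`. -/
theorem stmt3 {S : Signature} [DecidableEq S.IndPred] (Φ : List (ProdRule S))
    (M : Struc S) [Nonempty M.U] :
    Standard M Φ ↔
      ∀ (P : S.IndPred) (ts : Fin (S.arI P) → Tm S) (ρ : ℕ → M.U),
        Sat M ρ (.ind P ts) ↔ ∃ k : ℕ, Sat M ρ (unfold Φ k P ts) := by
  constructor
  · intro hst P ts ρ
    show (⟨P, fun i => (ts i).eval M ρ⟩ : (P : S.IndPred) × (Fin (S.arI P) → M.U)) ∈
      M.interpI ↔ _
    rw [hst, lfp_eq_iUnion, Set.mem_iUnion]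
    exact exists_congr fun k => (unfold_sat Φ M k P ts ρ).symm
  · intro hchar
    show M.interpI = _
    rw [lfp_eq_iUnion]
    ext v
    obtain ⟨P, a⟩ := v
    set ρ : ℕ → M.U := fun n => if h : n < S.arI P then a ⟨n, h⟩ else Classical.arbitrary M.U
      with hρ
    set ts : Fin (S.arI P) → Tm S := fun i => Tm.var i.val with hts
    have ha : (fun i => (ts i).eval M ρ) = a := by
      funext i
      show ρ i.val = a i
      simp [hρ, i.isLt]
    have h1 : (⟨P, a⟩ : (P : S.IndPred) × (Fin (S.arI P) → M.U)) ∈ M.interpI ↔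
        Sat M ρ (.ind P ts) := by
      show _ ↔ (⟨P, fun i => (ts i).eval M ρ⟩ :
        (P : S.IndPred) × (Fin (S.arI P) → M.U)) ∈ M.interpI
      rw [ha]
    rw [h1, hchar P ts ρ, Set.mem_iUnion]
    refine exists_congr fun k => ?_
    rw [unfold_sat Φ M k P ts ρ, ha]
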